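/- Let m ≥ 3 be an integer. Suppose ζ : [0,∞) → ℝ is continuous, differentiable on (0,∞), satisfies ζ(0) = 1, satisfies 1 + s ζ(s) > 0 for all s ≥ 0, and solves (1 + s ζ(s))^{m−1} s² ζ'(s) = (1 + s ζ(s))^{m−1} − 1 − (m−1) s ζ(s) for all s > 0. Then ζ'(s) > 0 for every s > 0 (in particular ζ(s) ≥ 1 for all s ≥ 0), ζ is bounded above, and ζ(s) converges as s → ∞ to a finite limit λ with λ ≥ 1. -/

import Mathlib

open Filter

/-- Strict Bernoulli inequality for positive `u` and exponent `≥ 2`. -/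
lemma strict_bernoulli {u : ℝ} (hu : 0 < u) {n : ℕ} (hn : 2 ≤ n) :
    1 + (n : ℝ) * u < (1 + u) ^ n := by
  have h := one_add_mul_le_pow (a := u) (by linarith) (n - 1)
  have hpow : (1 + u) ^ n = (1 + u) ^ (n - 1) * (1 + u) := by
    rw [← pow_succ]
    congr 1
    omega
  have hcast : ((n - 1 : ℕ) : ℝ) = (n : ℝ) - 1 := by
    have h1 : 1 ≤ n := by omega
    push_cast [Nat.cast_sub h1]
    ring
  rw [hcast] at h
  have hn' : (2 : ℝ) ≤ (n : ℝ) := by exact_mod_cast hn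
  rw [hpow]
  nlinarith [sq_nonneg u, mul_pos hu hu]

/-- Behaviour of the substitution `ζ` for the Burns–Calabi–Simanca ODE
in complex dimension `m ≥ 3`: if `ζ : [0,∞) → ℝ` is continuous, differentiable on `(0,∞)`,
with `ζ(0) = 1`, `1 + s ζ(s) > 0` for `s ≥ 0`, and solves
`(1 + s ζ)^(m-1) s² ζ' = (1 + s ζ)^(m-1) - 1 - (m-1) s ζ` on `(0,∞)`,
then `ζ' > 0` on `(0,∞)` (in particular `ζ ≥ 1` on `[0,∞)`), `ζ` is bounded above,
and `ζ(s)` converges as `s → ∞` to a finite limit `λ ≥ 1`. -/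
theorem statement1 (m : ℕ) (hm : 3 ≤ m) (ζ : ℝ → ℝ)
    (hcont : ContinuousOn ζ (Set.Ici (0 : ℝ)))
    (hdiff : ∀ s : ℝ, 0 < s → DifferentiableAt ℝ ζ s)
    (h0 : ζ 0 = 1)
    (hpos : ∀ s : ℝ, 0 ≤ s → 0 < 1 + s * ζ s)
    (hODE : ∀ s : ℝ, 0 < s →
      (1 + s * ζ s) ^ (m - 1) * s ^ 2 * deriv ζ s
        = (1 + s * ζ s) ^ (m - 1) - 1 - ((m : ℝ) - 1) * (s * ζ s)) :
    (∀ s : ℝ, 0 < s → 0 < deriv ζ s) ∧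
    (∀ s : ℝ, 0 ≤ s → 1 ≤ ζ s) ∧
    (∃ Cb : ℝ, ∀ s : ℝ, 0 ≤ s → ζ s ≤ Cb) ∧
    (∃ lam : ℝ, 1 ≤ lam ∧ Tendsto ζ atTop (nhds lam)) := by
  have hm1 : 2 ≤ m - 1 := by omega
  have hcastm : ((m - 1 : ℕ) : ℝ) = (m : ℝ) - 1 := by
    have h1 : 1 ≤ m := by omega
    push_cast [Nat.cast_sub h1]
    ring
  -- If ζ s > 0 at some s > 0, then deriv ζ s > 0.
  have hderiv : ∀ s : ℝ, 0 < s → 0 < ζ s → 0 < deriv ζ s := by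
    intro s hs hζ
    have hu0 : 0 < s * ζ s := mul_pos hs hζ
    have hA : 0 < (1 + s * ζ s) ^ (m - 1) := pow_pos (hpos s hs.le) _
    have hkey : 1 + ((m : ℝ) - 1) * (s * ζ s) < (1 + s * ζ s) ^ (m - 1) := by
      have := strict_bernoulli hu0 hm1
      rwa [hcastm] at this
    have hODEs := hODE s hs
    by_contra h
    push_neg at h
    have h1 : (1 + s * ζ s) ^ (m - 1) * s ^ 2 * deriv ζ s ≤ 0 :=
      mul_nonpos_of_nonneg_of_nonpos (by positivity) h
    rw [hODEs] at h1
    linarith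
  -- ζ is positive on [0, ∞).
  have hζpos : ∀ s : ℝ, 0 ≤ s → 0 < ζ s := by
    by_contra h
    push_neg at h
    obtain ⟨t, ht0, htζ⟩ := h
    set B : Set ℝ := Set.Ici (0 : ℝ) ∩ ζ ⁻¹' Set.Iic 0 with hB
    have hBne : B.Nonempty := ⟨t, ht0, htζ⟩
    have hBbdd : BddBelow B := ⟨0, fun x hx => hx.1⟩
    have hBclosed : IsClosed B :=
      hcont.preimage_isClosed_of_isClosed isClosed_Ici isClosed_Iic
    have ht₀B : sInf B ∈ B := hBclosed.csInf_mem hBne hBbdd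
    set t₀ := sInf B with ht₀
    have ht₀0 : 0 ≤ t₀ := ht₀B.1
    have ht₀ζ : ζ t₀ ≤ 0 := ht₀B.2
    have ht₀pos : 0 < t₀ := by
      rcases ht₀0.lt_or_eq with h | h
      · exact h
      · rw [← h, h0] at ht₀ζ; linarith
    have hmono : StrictMonoOn ζ (Set.Icc 0 t₀) := by
      apply strictMonoOn_of_deriv_pos (convex_Icc 0 t₀)
        (hcont.mono Set.Icc_subset_Ici_self)
      intro x hx
      rw [interior_Icc] at hx
      refine hderiv x hx.1 ?_
      by_contra hx'
      push_neg at hx'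
      have hxB : x ∈ B := ⟨hx.1.le, hx'⟩
      have := csInf_le hBbdd hxB
      rw [← ht₀] at this
      linarith [hx.2]
    have := hmono (Set.left_mem_Icc.mpr ht₀pos.le)
      (Set.right_mem_Icc.mpr ht₀pos.le) ht₀pos
    rw [h0] at this
    linarith
  have hderiv' : ∀ s : ℝ, 0 < s → 0 < deriv ζ s :=
    fun s hs => hderiv s hs (hζpos s hs.le)
  -- ζ strictly monotone on [0,∞)
  have hsm : StrictMonoOn ζ (Set.Ici 0) := by
    apply strictMonoOn_of_deriv_pos (convex_Ici 0) hcont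
    intro x hx
    rw [interior_Ici] at hx
    exact hderiv' x hx
  have hge1 : ∀ s : ℝ, 0 ≤ s → 1 ≤ ζ s := by
    intro s hs
    rcases hs.lt_or_eq with h | h
    · have := hsm (Set.mem_Ici.mpr le_rfl) (Set.mem_Ici.mpr hs) h
      rw [h0] at this
      linarith
    · rw [← h, h0]
  -- bound on the derivative: s² ζ'(s) ≤ 1
  have hbound : ∀ s : ℝ, 0 < s → s ^ 2 * deriv ζ s ≤ 1 := by
    intro s hs
    have hA : 0 < (1 + s * ζ s) ^ (m - 1) := pow_pos (hpos s hs.le) _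
    have hu0 : 0 < s * ζ s := mul_pos hs (hζpos s hs.le)
    have hODEs := hODE s hs
    have hm' : (2 : ℝ) ≤ (m : ℝ) - 1 := by
      have : (3 : ℝ) ≤ (m : ℝ) := by exact_mod_cast hm
      linarith
    have hle : (1 + s * ζ s) ^ (m - 1) * (s ^ 2 * deriv ζ s)
        ≤ (1 + s * ζ s) ^ (m - 1) * 1 := by
      rw [← mul_assoc, hODEs]
      nlinarith
    exact le_of_mul_le_mul_left hle hA
  -- comparison function: ζ s ≤ ζ 1 + 1 for s ≥ 1
  have hcomp : ∀ s : ℝ, 1 ≤ s → ζ s ≤ ζ 1 + 1 - s⁻¹ := by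
    have hhd : ∀ x : ℝ, 0 < x →
        HasDerivAt (fun t : ℝ => ζ 1 + 1 - t⁻¹ - ζ t) ((x ^ 2)⁻¹ - deriv ζ x) x := by
      intro x hx
      have h1 : HasDerivAt (fun t : ℝ => ζ 1 + 1 - t⁻¹) (-(-(x ^ 2)⁻¹)) x :=
        (hasDerivAt_inv hx.ne').const_sub (ζ 1 + 1)
      have h2 : HasDerivAt ζ (deriv ζ x) x := (hdiff x hx).hasDerivAt
      have h3 := h1.sub h2
      rw [neg_neg] at h3
      exact h3
    have hmono : MonotoneOn (fun t : ℝ => ζ 1 + 1 - t⁻¹ - ζ t) (Set.Ici 1) := by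
      apply monotoneOn_of_deriv_nonneg (convex_Ici 1)
      · apply ContinuousOn.sub
        · apply ContinuousOn.sub continuousOn_const
          exact ContinuousOn.inv₀ continuousOn_id
            (fun x hx => ne_of_gt (lt_of_lt_of_le one_pos hx))
        · exact hcont.mono (fun x hx => by
            simp only [Set.mem_Ici] at hx ⊢; linarith)
      · intro x hx
        rw [interior_Ici] at hx
        have hx1 : (0 : ℝ) < x := lt_trans one_pos hx
        exact ((hhd x hx1).differentiableAt).differentiableWithinAt
      · intro x hx
        rw [interior_Ici] at hx
        have hx1 : (0 : ℝ) < x := lt_trans one_pos hx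
        rw [(hhd x hx1).deriv]
        have hb := hbound x hx1
        have hx2 : (0 : ℝ) < x ^ 2 := by positivity
        have hdx : deriv ζ x ≤ (x ^ 2)⁻¹ := by
          rw [← one_div, le_div_iff₀ hx2]
          nlinarith
        linarith
    intro s hs
    have := hmono (Set.mem_Ici.mpr le_rfl) (Set.mem_Ici.mpr hs) hs
    simp only [inv_one] at this
    linarith
  have hCb : ∀ s : ℝ, 0 ≤ s → ζ s ≤ ζ 1 + 1 := by
    intro s hs
    rcases le_or_gt s 1 with h | h
    · have := hsm.monotoneOn (Set.mem_Ici.mpr hs) (Set.mem_Ici.mpr zero_le_one) h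
      linarith
    · have := hcomp s h.le
      have hsinv : 0 < s⁻¹ := by positivity
      linarith
  refine ⟨hderiv', hge1, ⟨ζ 1 + 1, hCb⟩, ?_⟩
  -- limit at infinity
  set φ : ℝ → ℝ := fun s => ζ (max s 1) with hφ
  have hφmono : Monotone φ := by
    intro a b hab
    exact hsm.monotoneOn (Set.mem_Ici.mpr (by positivity))
      (Set.mem_Ici.mpr (by positivity)) (max_le_max hab le_rfl)
  have hφbdd : BddAbove (Set.range φ) := by
    refine ⟨ζ 1 + 1, ?_⟩
    rintro _ ⟨s, rfl⟩
    exact hCb _ (by positivity)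
  have htend : Tendsto φ atTop (nhds (⨆ s, φ s)) := tendsto_atTop_ciSup hφmono hφbdd
  refine ⟨⨆ s, φ s, ?_, ?_⟩
  · have h1 : (1 : ℝ) ≤ φ 1 := by
      simp only [hφ, max_self]
      exact hge1 1 zero_le_one
    exact le_trans h1 (le_ciSup hφbdd 1)
  · apply htend.congr'
    filter_upwards [eventually_ge_atTop (1 : ℝ)] with s hs
    simp [hφ, max_eq_left hs]
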